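/- Let f : ℤ → ℤ be a bi-Lipschitz bijection and A_n = {-n, ..., n}. Then |f(A_n) ∩ A_n| / |A_n| → 1 as n → ∞. -/

import Mathlib

open Filter

open Filter Finset

section Aux

variable {φ : ℤ → ℤ} {K L : ℤ}

private lemma ivt_int (Q : ℤ → Prop) {a b : ℤ} (hab : a ≤ b) (ha : Q a) (hb : ¬ Q b) :
    ∃ u, a ≤ u ∧ u < b ∧ Q u ∧ ¬ Q (u + 1) := by
  have H : ∀ c : ℤ, a ≤ c → ¬ Q c → ∃ u, a ≤ u ∧ u < c ∧ Q u ∧ ¬ Q (u + 1) := by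
    refine Int.le_induction ?_ ?_
    · exact fun hc => absurd ha hc
    · intro c hac ih hc1
      by_cases h : Q c
      · exact ⟨c, hac, by omega, h, hc1⟩
      · obtain ⟨u, h1, h2, h3, h4⟩ := ih h
        exact ⟨u, h1, by omega, h3, h4⟩
  exact H b hab hb

private lemma step_bound (hLip : ∀ x y, |φ x - φ y| ≤ K * |x - y|) (x : ℤ) :
    |φ (x + 1) - φ x| ≤ K := by
  have h := hLip (x + 1) x
  have h1 : (x + 1) - x = (1 : ℤ) := by ring
  rw [h1] at h
  simpa using h

private lemma hK_ge (hbij : Function.Bijective φ)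
    (hLip : ∀ x y, |φ x - φ y| ≤ K * |x - y|) : 1 ≤ K := by
  have h01 : φ 1 ≠ φ 0 := fun h => by have := hbij.injective h; omega
  have h := step_bound hLip 0
  have : 1 ≤ |φ (0 + 1) - φ 0| := by
    rcases abs_cases (φ (0 + 1) - φ 0) with ⟨h1, h2⟩ | ⟨h1, h2⟩ <;>
      simp only [zero_add] at * <;> omega
  omega

private lemma hL_ge (hbij : Function.Bijective φ)
    (hLip : ∀ x y, |φ x - φ y| ≤ K * |x - y|)
    (hLipInv : ∀ x y, |x - y| ≤ L * |φ x - φ y|) : 1 ≤ L := by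
  have hK := hK_ge hbij hLip
  have h := hLipInv 1 0
  have h2 := step_bound hLip 0
  simp only [zero_add] at h2
  have h3 : |(1 : ℤ) - 0| = 1 := by norm_num
  rw [h3] at h
  have h4 : 0 ≤ |φ 1 - φ 0| := abs_nonneg _
  nlinarith

private lemma card_contra {b : ℤ} (hb : 1 ≤ b) (ψ : ℤ → ℤ) (hψ : Function.Injective ψ)
    (h : ∀ j, 0 ≤ j → j ≤ 2 * b → -b < ψ j ∧ ψ j < b) : False := by
  have hcard : (Finset.Icc (0:ℤ) (2*b)).card ≤ (Finset.Icc (-b+1) (b-1)).card := by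
    apply Finset.card_le_card_of_injOn ψ
    · intro j hj
      rw [Finset.mem_coe, Finset.mem_Icc] at hj ⊢
      have := h j hj.1 hj.2
      omega
    · intro x _ y _ hxy
      exact hψ hxy
  rw [Int.card_Icc, Int.card_Icc] at hcard
  omega

private lemma ray_sign {n b : ℤ} (hn : 0 ≤ n) (hK : 1 ≤ K) (hb : 1 ≤ b)
    (hstep : ∀ x, |φ (x+1) - φ x| ≤ K)
    (hbig : ∀ x, b ≤ x → n + K < |φ x|) :
    (∀ x, b ≤ x → n + K < φ x) ∨ (∀ x, b ≤ x → φ x < -(n + K)) := by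
  have hb0 := hbig b le_rfl
  have hcases : n + K < φ b ∨ φ b < -(n + K) := by
    rcases abs_cases (φ b) with ⟨e1, e2⟩ | ⟨e1, e2⟩ <;> omega
  rcases hcases with hpos | hneg
  · left
    refine Int.le_induction hpos ?_
    intro x hbx ih
    have hs := hstep x
    have hB := hbig (x+1) (by omega)
    rcases abs_cases (φ (x+1) - φ x) with ⟨e1, _⟩ | ⟨e1, _⟩ <;>
      rcases abs_cases (φ (x+1)) with ⟨e2, _⟩ | ⟨e2, _⟩ <;> omega
  · right
    refine Int.le_induction hneg ?_
    intro x hbx ih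
    have hs := hstep x
    have hB := hbig (x+1) (by omega)
    rcases abs_cases (φ (x+1) - φ x) with ⟨e1, _⟩ | ⟨e1, _⟩ <;>
      rcases abs_cases (φ (x+1)) with ⟨e2, _⟩ | ⟨e2, _⟩ <;> omega

private lemma size_bound (hL : 1 ≤ L) (hLipInv : ∀ x y, |x - y| ≤ L * |φ x - φ y|) (x : ℤ) :
    |x| ≤ L * (|φ x| + |φ 0|) := by
  have h := hLipInv x 0
  rw [sub_zero] at h
  have h2 : |φ x - φ 0| ≤ |φ x| + |φ 0| := abs_sub _ _
  calc |x| ≤ L * |φ x - φ 0| := h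
    _ ≤ L * (|φ x| + |φ 0|) := mul_le_mul_of_nonneg_left h2 (by omega)

private lemma dichotomy (hbij : Function.Bijective φ)
    (hLip : ∀ x y, |φ x - φ y| ≤ K * |x - y|)
    (hLipInv : ∀ x y, |x - y| ≤ L * |φ x - φ y|)
    {n : ℤ} (hn : 0 ≤ n) :
    ((∃ a, ∀ x, x ≤ a → φ x ≤ n) ∧ (∃ b, ∀ x, b ≤ x → n < φ x)) ∨
    ((∃ a, ∀ x, x ≤ a → n < φ x) ∧ (∃ b, ∀ x, b ≤ x → φ x ≤ n)) := by
  have hK := hK_ge hbij hLip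
  have hL := hL_ge hbij hLip hLipInv
  set b := L * (n + K + |φ 0|) + 1 with hbdef
  have habs0 : 0 ≤ |φ 0| := abs_nonneg _
  have hb : 1 ≤ b := by nlinarith
  have hbig : ∀ x : ℤ, b ≤ |x| → n + K < |φ x| := by
    intro x hx
    have h1 := size_bound hL hLipInv x
    have h2 : L * (n + K + |φ 0|) < L * (|φ x| + |φ 0|) := by
      have : L * (n + K + |φ 0|) + 1 ≤ |x| := hx
      linarith
    have h3 := lt_of_mul_lt_mul_left h2 (by omega : (0:ℤ) ≤ L)
    omega
  have hstep := step_bound hLip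
  have hR := ray_sign hn hK hb hstep (fun x hx => hbig x (by rw [abs_of_pos (by omega)]; exact hx))
  have hstep' : ∀ x : ℤ, |φ (-(x+1)) - φ (-x)| ≤ K := by
    intro x
    have h := hstep (-x - 1)
    have e : -x - 1 + 1 = -x := by ring
    rw [e] at h
    have e2 : -(x+1) = -x - 1 := by ring
    rw [e2, abs_sub_comm]
    exact h
  have hbig' : ∀ x : ℤ, b ≤ x → n + K < |φ (-x)| := by
    intro x hx; exact hbig (-x) (by rw [abs_neg, abs_of_pos (by omega)]; exact hx)
  have hLft := ray_sign (φ := fun y => φ (-y)) hn hK hb hstep' hbig'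
  set e := Equiv.ofBijective φ hbij with he
  have hsymm : ∀ y, φ (e.symm y) = y := fun y => Equiv.ofBijective_apply_symm_apply φ hbij y
  rcases hR with hRp | hRm <;> rcases hLft with hLp | hLm
  · exfalso
    apply card_contra hb (fun j => e.symm (n - j))
    · intro x y hxy
      have := e.symm.injective hxy
      omega
    · intro j hj0 hj2
      have hv : φ (e.symm (n - j)) = n - j := hsymm _
      constructor
      · by_contra hcon
        push_neg at hcon
        have h5 : n + K < φ (-(-(e.symm (n - j)))) := hLp (-(e.symm (n - j))) (by omega)
        rw [neg_neg] at h5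
        omega
      · by_contra hcon
        push_neg at hcon
        have := hRp _ hcon
        omega
  · left
    constructor
    · refine ⟨-b, fun x hx => ?_⟩
      have h5 : φ (-(-x)) < -(n + K) := hLm (-x) (by omega)
      rw [neg_neg] at h5
      omega
    · exact ⟨b, fun x hx => by have := hRp x hx; omega⟩
  · right
    constructor
    · refine ⟨-b, fun x hx => ?_⟩
      have h5 : n + K < φ (-(-x)) := hLp (-x) (by omega)
      rw [neg_neg] at h5
      omega
    · exact ⟨b, fun x hx => by have := hRm x hx; omega⟩
  · exfalso
    apply card_contra hb (fun j => e.symm (n + 1 + j))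
    · intro x y hxy
      have := e.symm.injective hxy
      omega
    · intro j hj0 hj2
      have hv : φ (e.symm (n + 1 + j)) = n + 1 + j := hsymm _
      constructor
      · by_contra hcon
        push_neg at hcon
        have h5 : φ (-(-(e.symm (n + 1 + j)))) < -(n + K) := hLm (-(e.symm (n + 1 + j))) (by omega)
        rw [neg_neg] at h5
        omega
      · by_contra hcon
        push_neg at hcon
        have := hRm _ hcon
        omega

private lemma main_plus (hbij : Function.Bijective φ)
    (hLip : ∀ x y, |φ x - φ y| ≤ K * |x - y|)
    (hLipInv : ∀ x y, |x - y| ≤ L * |φ x - φ y|)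
    (hO : ∀ n : ℤ, 0 ≤ n → (∃ a, ∀ x, x ≤ a → φ x ≤ n) ∧ (∃ b, ∀ x, b ≤ x → n < φ x)) :
    ∃ C : ℕ, ∀ n : ℤ, 0 ≤ n →
      ((Finset.Icc (-n) n).filter (fun x => n < φ x)).card ≤ C := by
  have hK := hK_ge hbij hLip
  have hL := hL_ge hbij hLip hLipInv
  set D := L * (2 * K) with hD
  have hD0 : 0 ≤ D := by positivity
  have exists_r : ∀ n : ℤ, 0 ≤ n → ∃ r, φ r ≤ n ∧ ∀ z, φ z ≤ n → z ≤ r := by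
    intro n hn
    obtain ⟨⟨a, ha⟩, ⟨b, hb⟩⟩ := hO n hn
    have Hbdd : ∃ c : ℤ, ∀ z, φ z ≤ n → z ≤ c := by
      refine ⟨b, fun z hz => ?_⟩
      by_contra h
      push_neg at h
      have := hb z (by omega)
      omega
    exact Int.exists_greatest_of_bdd Hbdd ⟨a, ha a le_rfl⟩
  have below : ∀ n : ℤ, 0 ≤ n → ∀ r, (φ r ≤ n ∧ ∀ z, φ z ≤ n → z ≤ r) →
      ∀ x, n < φ x → r - D < x := by
    intro n hn r hr x hx
    obtain ⟨⟨a, ha⟩, -⟩ := hO n hn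
    have hPa : φ (min a x) ≤ n := ha _ (min_le_left _ _)
    have hax : min a x ≤ x := min_le_right _ _
    obtain ⟨u, hu1, hu2, hu3, hu4⟩ := ivt_int (fun z => φ z ≤ n) hax hPa (by omega)
    push_neg at hu4
    have hr3 : n < φ (r + 1) := by
      by_contra h
      push_neg at h
      have := hr.2 _ h
      omega
    have s_u := step_bound hLip u
    have s_r := step_bound hLip r
    have vu : n + 1 - K ≤ φ u := by
      rcases abs_cases (φ (u+1) - φ u) with ⟨e1, _⟩ | ⟨e1, _⟩ <;> omega
    have vr : n + 1 - K ≤ φ r := by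
      rcases abs_cases (φ (r+1) - φ r) with ⟨e1, _⟩ | ⟨e1, _⟩ <;> omega
    have hur : |u - r| ≤ L * (K - 1) := by
      have h1 : |φ u - φ r| ≤ K - 1 := by
        rcases abs_cases (φ u - φ r) with ⟨e1, _⟩ | ⟨e1, _⟩ <;>
          · have := hr.1; omega
      calc |u - r| ≤ L * |φ u - φ r| := hLipInv u r
        _ ≤ L * (K - 1) := mul_le_mul_of_nonneg_left h1 (by omega)
    have hLK : L * (K - 1) ≤ D := by
      rw [hD]
      exact mul_le_mul_of_nonneg_left (by omega) (by omega)
    rcases abs_cases (u - r) with ⟨e1, _⟩ | ⟨e1, _⟩ <;> omega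
  set e := Equiv.ofBijective φ hbij with he
  have hsymm : ∀ y, φ (e.symm y) = y := fun y => Equiv.ofBijective_apply_symm_apply φ hbij y
  obtain ⟨r0, hr0⟩ := exists_r 0 le_rfl
  refine ⟨(2 * D - r0).toNat, ?_⟩
  intro n hn
  obtain ⟨rn, hrn⟩ := exists_r n hn
  have step1 : n ≤ rn - r0 + D := by
    have hinj : (Finset.Icc (1:ℤ) n).card ≤ (Finset.Icc (r0 - D + 1) rn).card := by
      apply Finset.card_le_card_of_injOn (fun j => e.symm j)
      · intro j hj
        rw [Finset.mem_coe, Finset.mem_Icc] at hj ⊢; beta_reduce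
        have hφ : φ (e.symm j) = j := hsymm j
        constructor
        · have := below 0 le_rfl r0 hr0 (e.symm j) (by omega)
          omega
        · exact hrn.2 _ (by omega)
      · intro x _ y _ hxy
        exact e.symm.injective hxy
    rw [Int.card_Icc, Int.card_Icc] at hinj
    have hmono : r0 ≤ rn := hrn.2 r0 (le_trans hr0.1 hn)
    omega
  have hsub : (Finset.Icc (-n) n).filter (fun x => n < φ x) ⊆ Finset.Icc (rn - D + 1) n := by
    intro x hx
    rw [Finset.mem_filter, Finset.mem_Icc] at hx
    rw [Finset.mem_Icc]
    have := below n hn rn hrn x hx.2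
    omega
  have hcard := Finset.card_le_card hsub
  rw [Int.card_Icc] at hcard
  omega

private lemma bad_bound (hbij : Function.Bijective φ)
    (hLip : ∀ x y, |φ x - φ y| ≤ K * |x - y|)
    (hLipInv : ∀ x y, |x - y| ≤ L * |φ x - φ y|) :
    ∃ C : ℕ, ∀ n : ℤ, 0 ≤ n →
      ((Finset.Icc (-n) n).filter (fun x => n < φ x)).card ≤ C := by
  rcases dichotomy hbij hLip hLipInv (le_refl (0:ℤ)) with h0 | h0
  · apply main_plus hbij hLip hLipInv
    intro n hn
    rcases dichotomy hbij hLip hLipInv hn with h | h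
    · exact h
    · exfalso
      obtain ⟨a0, ha0⟩ := h0.1
      obtain ⟨a1, ha1⟩ := h.1
      have e1 := ha0 (min a0 a1) (min_le_left _ _)
      have e2 := ha1 (min a0 a1) (min_le_right _ _)
      omega
  · -- reflect
    set φ' : ℤ → ℤ := fun x => φ (-x) with hφ'
    have hbij' : Function.Bijective φ' :=
      hbij.comp ⟨neg_injective, fun y => ⟨-y, by simp⟩⟩
    have hLip' : ∀ x y, |φ' x - φ' y| ≤ K * |x - y| := by
      intro x y
      have h := hLip (-x) (-y)
      have e1 : |(-x) - (-y)| = |x - y| := by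
        rw [neg_sub_neg, abs_sub_comm]
      rw [e1] at h
      exact h
    have hLipInv' : ∀ x y, |x - y| ≤ L * |φ' x - φ' y| := by
      intro x y
      have h := hLipInv (-x) (-y)
      have e1 : |(-x) - (-y)| = |x - y| := by
        rw [neg_sub_neg, abs_sub_comm]
      rw [e1] at h
      exact h
    have hO' : ∀ n : ℤ, 0 ≤ n →
        (∃ a, ∀ x, x ≤ a → φ' x ≤ n) ∧ (∃ b, ∀ x, b ≤ x → n < φ' x) := by
      intro n hn
      rcases dichotomy hbij' hLip' hLipInv' hn with h | h
      · exact h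
      · exfalso
        obtain ⟨a1, ha1⟩ := h.1
        obtain ⟨b0, hb0⟩ := h0.2
        have e1 : n < φ' (min a1 (-b0)) := ha1 _ (min_le_left _ _)
        have e2 : φ (-(min a1 (-b0))) ≤ 0 := hb0 _ (by have := min_le_right a1 (-b0); omega)
        have e3 : φ' (min a1 (-b0)) = φ (-(min a1 (-b0))) := rfl
        omega
    obtain ⟨C, hC⟩ := main_plus hbij' hLip' hLipInv' hO'
    refine ⟨C, fun n hn => ?_⟩
    have himg : (Finset.Icc (-n) n).filter (fun x => n < φ x) =
        ((Finset.Icc (-n) n).filter (fun x => n < φ' x)).image (fun x => -x) := by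
      ext x
      simp only [Finset.mem_image, Finset.mem_filter, Finset.mem_Icc, hφ']
      constructor
      · intro hx
        exact ⟨-x, ⟨⟨by omega, by omega⟩, by rw [neg_neg]; exact hx.2⟩, by rw [neg_neg]⟩
      · rintro ⟨y, ⟨⟨h1, h2⟩, h3⟩, rfl⟩
        exact ⟨⟨by omega, by omega⟩, h3⟩
    rw [himg, Finset.card_image_of_injective _ neg_injective]
    exact hC n hn

end Aux

/-- Følner property: for a bi-Lipschitz bijection f of ℤ and A_n = [-n, n],
|f(A_n) ∩ A_n| / |A_n| → 1. -/
theorem folner_property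
    (f : ℤ → ℤ) (hf : Function.Bijective f) (K L : ℤ)
    (hLip : ∀ x y : ℤ, |f x - f y| ≤ K * |x - y|)
    (hLipInv : ∀ x y : ℤ, |x - y| ≤ L * |f x - f y|) :
    Tendsto (fun n : ℕ =>
      ((((Finset.Icc (-(n : ℤ)) n).image f) ∩ Finset.Icc (-(n : ℤ)) n).card : ℝ) /
        ((Finset.Icc (-(n : ℤ)) n).card : ℝ)) atTop (nhds 1) := by
  classical
  set e := Equiv.ofBijective f hf with he
  set g : ℤ → ℤ := fun y => e.symm y with hg
  have hfg : ∀ y, f (g y) = y := fun y => Equiv.ofBijective_apply_symm_apply f hf y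
  have hbijg : Function.Bijective g := e.symm.bijective
  have hLipg : ∀ x y : ℤ, |g x - g y| ≤ L * |x - y| := by
    intro x y
    have h := hLipInv (g x) (g y)
    rw [hfg, hfg] at h
    exact h
  have hLipInvg : ∀ x y : ℤ, |x - y| ≤ K * |g x - g y| := by
    intro x y
    have h := hLip (g x) (g y)
    rw [hfg, hfg] at h
    exact h
  obtain ⟨C1, hC1⟩ := bad_bound hbijg hLipg hLipInvg
  have hnegbij : Function.Bijective (fun z : ℤ => -z) := ⟨neg_injective, fun y => ⟨-y, by simp⟩⟩
  have hbijg2 : Function.Bijective (fun y => -(g y)) := Function.Bijective.comp hnegbij hbijg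
  have hLipg2 : ∀ x y : ℤ, |(-(g x)) - (-(g y))| ≤ L * |x - y| := by
    intro x y
    rw [neg_sub_neg, abs_sub_comm]
    exact hLipg x y
  have hLipInvg2 : ∀ x y : ℤ, |x - y| ≤ K * |(-(g x)) - (-(g y))| := by
    intro x y
    rw [neg_sub_neg, abs_sub_comm (g y) (g x)]
    exact hLipInvg x y
  obtain ⟨C2, hC2⟩ := bad_bound hbijg2 hLipg2 hLipInvg2
  set C : ℕ := C1 + C2 with hC
  -- per-n cardinality facts
  have key : ∀ n : ℕ,
      (2*n+1) - C ≤ (((Finset.Icc (-(n : ℤ)) n).image f) ∩ Finset.Icc (-(n : ℤ)) n).card ∧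
      (((Finset.Icc (-(n : ℤ)) n).image f) ∩ Finset.Icc (-(n : ℤ)) n).card ≤ 2*n+1 ∧
      (Finset.Icc (-(n : ℤ)) n).card = 2*n+1 := by
    intro n
    set m : ℤ := (n : ℤ) with hm
    have hm0 : (0:ℤ) ≤ m := by positivity
    set I : Finset ℤ := Finset.Icc (-m) m with hI
    set E : Finset ℤ := I \ I.image f with hE
    have hIcard : I.card = 2*n+1 := by
      rw [hI, Int.card_Icc]
      omega
    have hEsub : E ⊆ (I.filter (fun y => m < g y)) ∪ (I.filter (fun y => m < -(g y))) := by
      intro y hy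
      rw [hE, Finset.mem_sdiff] at hy
      obtain ⟨hy1, hy2⟩ := hy
      have hgy : g y ∉ Finset.Icc (-m) m := by
        intro hmem
        apply hy2
        rw [Finset.mem_image]
        exact ⟨g y, hmem, hfg y⟩
      rw [Finset.mem_Icc] at hgy
      push_neg at hgy
      rw [Finset.mem_union, Finset.mem_filter, Finset.mem_filter]
      by_cases hcase : -m ≤ g y
      · exact Or.inl ⟨hy1, by have := hgy hcase; omega⟩
      · exact Or.inr ⟨hy1, by omega⟩
    have hEcard : E.card ≤ C := by
      calc E.card ≤ ((I.filter (fun y => m < g y)) ∪ (I.filter (fun y => m < -(g y)))).card :=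
            Finset.card_le_card hEsub
        _ ≤ (I.filter (fun y => m < g y)).card + (I.filter (fun y => m < -(g y))).card :=
            Finset.card_union_le _ _
        _ ≤ C1 + C2 := add_le_add (hC1 m hm0) (hC2 m hm0)
    have hinter : I.image f ∩ I = I \ E := by
      rw [hE, Finset.sdiff_sdiff_self_left, Finset.inter_comm]
    have hEI : E ⊆ I := by rw [hE]; exact Finset.sdiff_subset
    have hcard2 : (I.image f ∩ I).card = I.card - E.card := by
      rw [hinter, Finset.card_sdiff_of_subset hEI]
    refine ⟨?_, ?_, hIcard⟩
    · rw [hcard2, hIcard]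
      omega
    · rw [hcard2, hIcard]
      omega
  -- limit
  have hpos : ∀ n : ℕ, (0:ℝ) < ((2*n+1 : ℕ) : ℝ) := by
    intro n
    positivity
  have hlow : Tendsto (fun n : ℕ => 1 - (C:ℝ) / ((2*n+1 : ℕ) : ℝ)) atTop (nhds 1) := by
    have h2 : Tendsto (fun n : ℕ => ((2*n+1 : ℕ) : ℝ)) atTop atTop := by
      have h4 : Tendsto (fun n : ℕ => 2*(n:ℝ)+1) atTop atTop := by
        apply Filter.tendsto_atTop_add_const_right
        exact Tendsto.const_mul_atTop two_pos tendsto_natCast_atTop_atTop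
      convert h4 using 2 with n
      push_cast
      ring
    have h3 : Tendsto (fun n : ℕ => (C:ℝ) / ((2*n+1 : ℕ) : ℝ)) atTop (nhds 0) :=
      Tendsto.div_atTop tendsto_const_nhds h2
    have h5 := (tendsto_const_nhds :
      Tendsto (fun _ : ℕ => (1:ℝ)) atTop (nhds 1)).sub h3
    simpa using h5
  refine tendsto_of_tendsto_of_tendsto_of_le_of_le hlow tendsto_const_nhds ?_ ?_
  · intro n
    obtain ⟨k1, k2, k3⟩ := key n
    dsimp only
    rw [k3]
    have hEc : ((2*n+1 : ℕ) : ℝ) - C ≤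
        (((Finset.Icc (-(n : ℤ)) n).image f ∩ Finset.Icc (-(n : ℤ)) n).card : ℝ) := by
      have h1 : (((2*n+1) - C : ℕ) : ℝ) ≤
          (((Finset.Icc (-(n : ℤ)) n).image f ∩ Finset.Icc (-(n : ℤ)) n).card : ℝ) := by
        exact_mod_cast k1
      have h2 : ((2*n+1 : ℕ) : ℝ) - (C : ℝ) ≤ (((2*n+1) - C : ℕ) : ℝ) := by
        rcases le_or_gt C (2*n+1) with h | h
        · rw [Nat.cast_sub h]
        · have h3 : (2*n+1) - C = 0 := by omega
          rw [h3]
          have h4 : ((2*n+1 : ℕ) : ℝ) ≤ (C : ℝ) := by exact_mod_cast h.le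
          push_cast at h4 ⊢
          linarith
      linarith
    have heq : 1 - (C:ℝ) / ((2*n+1 : ℕ) : ℝ) =
        (((2*n+1 : ℕ) : ℝ) - C) / ((2*n+1 : ℕ) : ℝ) := by
      field_simp
    rw [heq, div_le_div_iff₀ (hpos n) (hpos n)]
    nlinarith [hEc, hpos n]
  · intro n
    obtain ⟨k1, k2, k3⟩ := key n
    dsimp only
    rw [k3, div_le_one (hpos n)]
    exact_mod_cast k2
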